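/- arXiv:0908.4459 — 2 statements merged into one kernel-verified Lean document; each statement's English description precedes it below -/
import Mathlib

section
/- Let Ω ⊆ ℂⁿ be a bounded domain, Ω' a domain strictly containing Ω, and suppose every bounded holomorphic function on Ω extends to a holomorphic function on Ω'. Let P ∈ Ω' \ Ω and define f_j(z) = z_j − P_j for 1 ≤ j ≤ n. Then there do NOT exist bounded holomorphic functions g_1, …, g_n on Ω with f_1 g_1 + ⋯ + f_n g_n ≡ 1 on Ω. -/
open Set Metric Filter

/-- If every bounded holomorphic function on a bounded domain `Ω ⊆ ℂⁿ` extends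
holomorphically to a strictly larger domain `Ω'`, and `P ∈ Ω' \ Ω`, then the corona
problem for the data `f_j(z) = z_j - P_j` has no bounded holomorphic solution on `Ω`. -/
theorem no_corona_solution (n : ℕ) (Ω Ω' : Set (Fin n → ℂ))
    (hΩopen : IsOpen Ω) (hΩconn : IsConnected Ω) (hΩbdd : Bornology.IsBounded Ω)
    (hΩ'open : IsOpen Ω') (hΩ'conn : IsConnected Ω')
    (hsub : Ω ⊆ Ω') (hne : Ω ≠ Ω')
    (hext : ∀ h : (Fin n → ℂ) → ℂ, DifferentiableOn ℂ h Ω →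
      (∃ M : ℝ, ∀ z ∈ Ω, ‖h z‖ ≤ M) →
      ∃ H : (Fin n → ℂ) → ℂ, DifferentiableOn ℂ H Ω' ∧ ∀ z ∈ Ω, H z = h z)
    (P : Fin n → ℂ) (hP : P ∈ Ω' \ Ω) :
    ¬ ∃ g : Fin n → (Fin n → ℂ) → ℂ,
        (∀ j, DifferentiableOn ℂ (g j) Ω ∧ ∃ M : ℝ, ∀ z ∈ Ω, ‖g j z‖ ≤ M) ∧
        ∀ z ∈ Ω, (∑ j, (z j - P j) * g j z) = 1 := by
  rintro ⟨g, hg, hsum⟩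
  choose G hGdiff hGeq using fun j => (hext (g j) (hg j).1 (hg j).2)
  set F : (Fin n → ℂ) → ℂ := fun z => ∑ j, (z j - P j) * G j z with hF
  have hFdiff : DifferentiableOn ℂ F Ω' := by
    apply DifferentiableOn.fun_sum
    intro j _
    exact (((differentiable_pi.mp differentiable_id j).differentiableOn).fun_sub
      (differentiableOn_const _)).mul (hGdiff j)
  -- the set where F is locally 1
  set U : Set (Fin n → ℂ) := {z | ∀ᶠ w in nhds z, F w = 1} with hU
  have hUopen : IsOpen U := isOpen_setOf_eventually_nhds
  -- key step: propagation along complex lines inside a ball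
  have key : ∀ w : Fin n → ℂ, ∀ r : ℝ, ball w r ⊆ Ω' →
      ∀ u ∈ ball w r, u ∈ U → ∀ v ∈ ball w r, F v = 1 := by
    intro w r hball u hu huU v hv
    set L : ℂ → (Fin n → ℂ) := fun t => fun j => u j + t * (v j - u j) with hL
    have hLdiff : Differentiable ℂ L :=
      differentiable_pi.mpr fun j =>
        (differentiable_const _).add (differentiable_id.mul (differentiable_const _))
    have hL0 : L 0 = u := by funext j; simp [hL]
    have hL1 : L 1 = v := by funext j; simp [hL]
    set T : Set ℂ := L ⁻¹' (ball w r) with hT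
    have hTopen : IsOpen T := isOpen_ball.preimage hLdiff.continuous
    have hTconv : Convex ℝ T := by
      intro t₁ h₁ t₂ h₂ a b ha hb hab
      have hmem : a • L t₁ + b • L t₂ ∈ ball w r :=
        (convex_ball w r) h₁ h₂ ha hb hab
      have : L (a • t₁ + b • t₂) = a • L t₁ + b • L t₂ := by
        funext j
        simp only [hL, Pi.add_apply, Pi.smul_apply, smul_eq_mul, Complex.real_smul]
        have hab' : (a : ℂ) + b = 1 := by norm_cast
        linear_combination (-(u j)) * hab'
      rw [Set.mem_preimage, this]
      exact hmem
    have h0T : (0 : ℂ) ∈ T := by simpa [hT, hL0] using hu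
    have h1T : (1 : ℂ) ∈ T := by simpa [hT, hL1] using hv
    have hφdiff : DifferentiableOn ℂ (F ∘ L) T :=
      hFdiff.comp hLdiff.differentiableOn fun t ht => hball ht
    have hφan : AnalyticOnNhd ℂ (F ∘ L) T := hφdiff.analyticOnNhd hTopen
    have hloc : (F ∘ L) =ᶠ[nhds (0 : ℂ)] (fun _ => (1 : ℂ)) := by
      have hcont : ContinuousAt L 0 := hLdiff.continuous.continuousAt
      have : Filter.Tendsto L (nhds 0) (nhds u) := by rw [← hL0]; exact hcont
      exact this.eventually huU
    have hEq := hφan.eqOn_of_preconnected_of_eventuallyEq analyticOnNhd_const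
      hTconv.isPreconnected h0T hloc
    have := hEq h1T
    simpa [hL1] using this
  -- Ω' ∩ closure U ⊆ U
  have hclosed : Ω' ∩ closure U ⊆ U := by
    rintro w ⟨hwΩ', hwcl⟩
    obtain ⟨r, hr, hball⟩ := Metric.isOpen_iff.mp hΩ'open w hwΩ'
    obtain ⟨u, huU, hu⟩ := Metric.mem_closure_iff.mp hwcl r hr
    rw [dist_comm] at hu
    have hFone : ∀ v ∈ ball w r, F v = 1 := key w r hball u (mem_ball.mpr hu) huU
    show ∀ᶠ z in nhds w, F z = 1
    filter_upwards [Metric.ball_mem_nhds w hr] with z hz using hFone z hz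
  -- U is nonempty in Ω'
  obtain ⟨z₀, hz₀⟩ := hΩconn.nonempty
  have hz₀U : z₀ ∈ U := by
    show ∀ᶠ z in nhds z₀, F z = 1
    filter_upwards [hΩopen.mem_nhds hz₀] with z hz
    rw [hF]
    rw [← hsum z hz]
    exact Finset.sum_congr rfl fun j _ => by rw [hGeq j z hz]
  -- Ω' ⊆ U by connectedness
  have hΩ'U : Ω' ⊆ U := by
    apply hΩ'conn.isPreconnected.subset_left_of_subset_union hUopen
      isClosed_closure.isOpen_compl
    · exact Set.disjoint_left.mpr fun x hx hx' => hx' (subset_closure hx)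
    · intro z hz
      by_cases hzc : z ∈ closure U
      · exact Or.inl (hclosed ⟨hz, hzc⟩)
      · exact Or.inr hzc
    · exact ⟨z₀, hsub hz₀, hz₀U⟩
  have hPU : P ∈ U := hΩ'U hP.1
  have hFP : F P = 1 := hPU.self_of_nhds
  simp [hF] at hFP
end

section
/- Let Ω ⊆ ℂⁿ and Ω̂ ⊋ Ω be bounded domains, and suppose the restriction of the extension assignment T : H^∞(Ω) → H^∞(Ω̂) is a well-defined linear map (every bounded holomorphic f on Ω has a unique bounded holomorphic extension f̂ to Ω̂). Then ‖f̂‖_{H^∞(Ω̂)} = ‖f‖_{H^∞(Ω)} for every f ∈ H^∞(Ω); in particular T has operator norm 1 (when H^∞(Ω) is nonzero). -/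
open Metric Filter

/-- Identity principle for holomorphic functions on a normed complex space, via
restriction to complex lines (only 1-D analyticity from Mathlib is used). -/
lemma eq_one_of_eq_one_near {E : Type*} [NormedAddCommGroup E] [NormedSpace ℂ E]
    {G : E → ℂ} {U : Set E} (hU : IsOpen U) (hUc : IsPreconnected U)
    (hG : DifferentiableOn ℂ G U) {w : E} (hw : w ∈ U)
    (hloc : ∀ᶠ y in nhds w, G y = 1) : ∀ z ∈ U, G z = 1 := by
  set S : Set E := {z | ∀ᶠ y in nhds z, G y = 1} with hS
  have hSopen : IsOpen S := by
    rw [isOpen_iff_mem_nhds]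
    intro z hz
    exact hz.eventually_nhds
  have key : closure S ∩ U ⊆ S := by
    rintro z ⟨hzc, hzU⟩
    obtain ⟨r, hr, hball⟩ := (Metric.isOpen_iff.1 hU) z hzU
    obtain ⟨y, hyS, hyz⟩ := Metric.mem_closure_iff.1 hzc (r/2) (by linarith)
    -- every point of ball z (r/2) has value 1
    have hval : ∀ w' ∈ ball z (r/2), G w' = 1 := by
      intro w' hw'
      set v := w' - y with hv
      set T : Set ℂ := {t | y + t • v ∈ ball z r} with hT
      have hTopen : IsOpen T :=
        (isOpen_ball).preimage (continuous_const.add (continuous_id.smul continuous_const))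
      have hTconv : Convex ℝ T := by
        intro t1 ht1 t2 ht2 a b ha hb hab
        have h := (convex_ball z r) ht1 ht2 ha hb hab
        simp only [hT, Set.mem_setOf_eq] at h ⊢
        have habC : (a : ℂ) + b = 1 := by exact_mod_cast hab
        convert h using 1
        have hb1 : (b : ℂ) = 1 - (a : ℂ) := by linear_combination habC
        match_scalars <;>
          (simp only [Algebra.smul_def, Complex.coe_algebraMap]; push_cast; rw [hb1]; ring)
      have hmdiff : Differentiable ℂ fun t : ℂ => y + t • v :=
        (differentiable_const y).add (differentiable_id.smul_const v)
      have hφdiff : DifferentiableOn ℂ (fun t : ℂ => G (y + t • v)) T := by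
        apply DifferentiableOn.comp (hG.mono hball) hmdiff.differentiableOn
        intro t ht
        exact ht
      have h0T : (0 : ℂ) ∈ T := by
        simp only [hT, Set.mem_setOf_eq, zero_smul, add_zero]
        rw [mem_ball, dist_comm]
        linarith
      have h1T : (1 : ℂ) ∈ T := by
        simp only [hT, Set.mem_setOf_eq, one_smul, hv, add_sub_cancel]
        exact mem_ball.2 (lt_of_lt_of_le (mem_ball.1 hw') (by linarith))
      have hev : (fun t : ℂ => G (y + t • v)) =ᶠ[nhds 0] fun _ => (1 : ℂ) := by
        have hcont : Continuous fun t : ℂ => y + t • v := hmdiff.continuous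
        have h0 : Filter.Tendsto (fun t : ℂ => y + t • v) (nhds 0) (nhds y) := by
          simpa using hcont.tendsto 0
        have hyS' : ∀ᶠ x in nhds y, G x = 1 := hyS
        exact h0.eventually hyS'
      have := AnalyticOnNhd.eqOn_of_preconnected_of_eventuallyEq
        (hφdiff.analyticOnNhd hTopen) analyticOnNhd_const hTconv.isPreconnected h0T hev h1T
      simpa [hv] using this
    exact Filter.eventually_of_mem (ball_mem_nhds z (by linarith)) hval
  have : U ⊆ S := hUc.subset_of_closure_inter_subset hSopen ⟨w, hw, hloc⟩ key
  exact fun z hz => ((this hz).self_of_nhds)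



/-- If every bounded holomorphic function on a bounded domain `Ω` has a (unique)
bounded holomorphic extension to the strictly larger bounded domain `Ω̂`, then the
extension has the same sup norm; in particular the extension operator `T` has
norm `1`. -/
theorem extension_operator_norm_one (n : ℕ) (Ω Ωhat : Set (Fin n → ℂ))
    (hΩopen : IsOpen Ω) (hΩconn : IsConnected Ω) (hΩbdd : Bornology.IsBounded Ω)
    (hΩhatopen : IsOpen Ωhat) (hΩhatconn : IsConnected Ωhat)
    (hΩhatbdd : Bornology.IsBounded Ωhat)
    (hsub : Ω ⊆ Ωhat) (hne : Ω ≠ Ωhat)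
    (hext : ∀ f : (Fin n → ℂ) → ℂ, DifferentiableOn ℂ f Ω →
      (∃ M : ℝ, ∀ z ∈ Ω, ‖f z‖ ≤ M) →
      ∃ F : (Fin n → ℂ) → ℂ, DifferentiableOn ℂ F Ωhat ∧
        (∃ M : ℝ, ∀ z ∈ Ωhat, ‖F z‖ ≤ M) ∧ ∀ z ∈ Ω, F z = f z) :
    ∀ f F : (Fin n → ℂ) → ℂ, DifferentiableOn ℂ f Ω →
      (∃ M : ℝ, ∀ z ∈ Ω, ‖f z‖ ≤ M) →
      DifferentiableOn ℂ F Ωhat →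
      (∃ M : ℝ, ∀ z ∈ Ωhat, ‖F z‖ ≤ M) →
      (∀ z ∈ Ω, F z = f z) →
      (⨆ z : ↥Ωhat, ‖F z‖) = ⨆ z : ↥Ω, ‖f z‖ := by
  intro f F hf hfb hF hFb hFf
  obtain ⟨w, hw⟩ := hΩconn.nonempty
  have : Nonempty ↥Ω := ⟨⟨w, hw⟩⟩
  have : Nonempty ↥Ωhat := ⟨⟨w, hsub hw⟩⟩
  obtain ⟨M, hM⟩ := hfb
  obtain ⟨N, hN⟩ := hFb
  set s := ⨆ z : ↥Ω, ‖f z‖ with hs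
  have hbdd : BddAbove (Set.range fun z : ↥Ω => ‖f z‖) :=
    ⟨M, by rintro x ⟨z, rfl⟩; exact hM z z.2⟩
  have hbddF : BddAbove (Set.range fun z : ↥Ωhat => ‖F z‖) :=
    ⟨N, by rintro x ⟨z, rfl⟩; exact hN z z.2⟩
  have hfs : ∀ z ∈ Ω, ‖f z‖ ≤ s := fun z hz => le_ciSup hbdd ⟨z, hz⟩
  have hs0 : 0 ≤ s := le_trans (norm_nonneg _) (hfs w hw)
  have key : ∀ z₀ ∈ Ωhat, ‖F z₀‖ ≤ s := by
    intro z₀ hz₀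
    by_contra hlt
    push_neg at hlt
    set c := F z₀ with hc
    have hcn : s < ‖c‖ := hlt
    have hne' : ∀ z ∈ Ω, c - f z ≠ 0 := by
      intro z hz h0
      rw [sub_eq_zero] at h0
      have := hfs z hz
      rw [← h0] at this
      linarith
    have hlow : ∀ z ∈ Ω, ‖c‖ - s ≤ ‖c - f z‖ := by
      intro z hz
      have h1 : ‖c‖ - ‖f z‖ ≤ ‖c - f z‖ := norm_sub_norm_le _ _
      have := hfs z hz
      linarith
    -- h = (c - f)⁻¹ is bounded holomorphic on Ω
    have hhdiff : DifferentiableOn ℂ (fun z => (c - f z)⁻¹) Ω :=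
      ((differentiableOn_const c).sub hf).inv hne'
    have hhbd : ∃ M : ℝ, ∀ z ∈ Ω, ‖(c - f z)⁻¹‖ ≤ M := by
      refine ⟨(‖c‖ - s)⁻¹, fun z hz => ?_⟩
      rw [norm_inv]
      exact inv_anti₀ (by linarith) (hlow z hz)
    obtain ⟨H, hHdiff, hHbd, hHeq⟩ := hext _ hhdiff hhbd
    -- G = H * (c - F) is holomorphic on Ωhat and equals 1 on Ω
    have hGdiff : DifferentiableOn ℂ (fun z => H z * (c - F z)) Ωhat :=
      hHdiff.mul ((differentiableOn_const c).sub hF)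
    have hloc : ∀ᶠ y in nhds w, H y * (c - F y) = 1 := by
      refine Filter.eventually_of_mem (hΩopen.mem_nhds hw) fun z hz => ?_
      rw [hHeq z hz, hFf z hz, inv_mul_cancel₀ (hne' z hz)]
    have hone := eq_one_of_eq_one_near hΩhatopen hΩhatconn.isPreconnected hGdiff
      (hsub hw) hloc z₀ hz₀
    rw [← hc, sub_self, mul_zero] at hone
    exact zero_ne_one hone
  apply le_antisymm
  · exact ciSup_le fun z => key z z.2
  · refine ciSup_le fun z => ?_
    rw [← hFf z z.2]
    exact le_ciSup hbddF ⟨(z : Fin n → ℂ), hsub z.2⟩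
end
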